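/- Let ω₂ : [0,∞) → ℝ satisfy |ω₂(t)| ≤ Ce^{-αt} with C, α > 0, and let H : ℝ × (0,∞) → ℝ satisfy |H(x,s)| ≤ C₁ (s+1)^{-3/2} e^{-(x-cs)²/(C₁ s)} for x ∈ ℝ, s > 0, where C₁ ≥ 2c²/α. Then there exists C₂ > 0 such that for all x ∈ ℝ, t > 1: ∫_{t/2}^{t} |ω₂(t-s) H(x,s)| ds ≤ C₂ (t+1)^{-3/2} e^{-(x-ct)²/(C₁ t)}. -/

import Mathlib

open MeasureTheory

private lemma key_quad (x c α C₁ s t : ℝ) (hs : 0 < s) (hst : s ≤ t) (hC₁ : 0 < C₁)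
    (h2 : 2 * c^2 ≤ α * C₁) :
    (x - c*t)^2 / (C₁*t) ≤ (x - c*s)^2 / (C₁*s) + α/2 * (t - s) := by
  have ht : 0 < t := lt_of_lt_of_le hs hst
  have h1 : (x - c*t)^2 * s ≤ (x - c*s)^2 * t + c^2*(t-s)*s*t := by
    nlinarith [mul_nonneg (sub_nonneg.2 hst) (sq_nonneg x)]
  rw [div_le_iff₀ (by positivity : (0:ℝ) < C₁*t), add_mul, div_mul_eq_mul_div,
    ← sub_le_iff_le_add, le_div_iff₀ (by positivity : (0:ℝ) < C₁*s)]
  nlinarith [mul_nonneg (mul_nonneg (sub_nonneg.2 hst) (le_of_lt ht))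
    (mul_nonneg hs.le (sub_nonneg.2 h2))]

private lemma key_rpow (s t : ℝ) (ht : 1 < t) (hs : t/2 ≤ s) :
    (s + 1)^(-(3:ℝ)/2) ≤ (2:ℝ)^((3:ℝ)/2) * (t + 1)^(-(3:ℝ)/2) := by
  have h1 : (0:ℝ) < (t+1)/2 := by linarith
  have h2 : (t+1)/2 ≤ s + 1 := by linarith
  calc (s+1)^(-(3:ℝ)/2) ≤ ((t+1)/2)^(-(3:ℝ)/2) :=
        Real.rpow_le_rpow_of_nonpos h1 h2 (by norm_num)
    _ = (t+1)^(-(3:ℝ)/2) / (2:ℝ)^(-(3:ℝ)/2) :=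
        Real.div_rpow (by linarith) (by norm_num) _
    _ = (2:ℝ)^((3:ℝ)/2) * (t+1)^(-(3:ℝ)/2) := by
        rw [show (-(3:ℝ)/2) = -((3:ℝ)/2) by norm_num,
          Real.rpow_neg (by norm_num : (0:ℝ) ≤ 2), div_inv_eq_mul]
        ring

private lemma key_int (α t : ℝ) (hα : 0 < α) :
    ∫ s in (t/2)..t, Real.exp (α/2*(s-t)) ≤ 2/α := by
  have key : ∀ s : ℝ, HasDerivAt (fun u => 2/α * Real.exp (α/2*(u-t)))
      (Real.exp (α/2*(s-t))) s := by
    intro s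
    have h0 : HasDerivAt (fun u : ℝ => α/2*(u-t)) (α/2) s := by
      simpa using ((hasDerivAt_id s).sub_const t).const_mul (α/2)
    have h1 := (h0.exp).const_mul (2/α)
    refine h1.congr_deriv ?_
    field_simp [hα.ne']
  have heq : ∫ s in (t/2)..t, Real.exp (α/2*(s-t))
      = 2/α * Real.exp (α/2*(t-t)) - 2/α * Real.exp (α/2*(t/2-t)) := by
    apply intervalIntegral.integral_eq_sub_of_hasDerivAt (fun s _ => key s)
    apply Continuous.intervalIntegrable; continuity
  rw [heq]
  have h3 : Real.exp (α/2*(t/2-t)) > 0 := Real.exp_pos _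
  have h4 : Real.exp (α/2*(t-t)) = 1 := by simp
  rw [h4]
  have h5 : (0:ℝ) < 2/α := by positivity
  nlinarith

theorem stmt13 (ω₂ : ℝ → ℝ) (H : ℝ → ℝ → ℝ) (C α c C₁ : ℝ)
    (hC : 0 < C) (hα : 0 < α) (hc : 0 < c)
    (hC₁ : C₁ ≥ 2 * c^2 / α) (hC₁pos : 0 < C₁)
    (hω : ∀ t : ℝ, 0 ≤ t → |ω₂ t| ≤ C * Real.exp (-α * t))
    (hH : ∀ x s : ℝ, 0 < s →
      |H x s| ≤ C₁ * (s + 1)^(-(3:ℝ)/2) * Real.exp (-(x - c*s)^2 / (C₁ * s))) :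
    ∃ C₂ : ℝ, 0 < C₂ ∧ ∀ x t : ℝ, 1 < t →
      (∫ s in (t/2)..t, |ω₂ (t - s) * H x s|) ≤
        C₂ * (t + 1)^(-(3:ℝ)/2) * Real.exp (-(x - c*t)^2 / (C₁ * t)) := by
  have hαC : 2*c^2 ≤ α*C₁ := by
    rw [ge_iff_le, div_le_iff₀ hα] at hC₁; linarith
  refine ⟨C * C₁ * (2:ℝ)^((3:ℝ)/2) * (2/α), by positivity, ?_⟩
  intro x t ht
  have hP : (0:ℝ) < (t+1)^(-(3:ℝ)/2) := Real.rpow_pos_of_pos (by linarith) _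
  have hE : (0:ℝ) < Real.exp (-(x - c*t)^2 / (C₁ * t)) := Real.exp_pos _
  by_cases hint : IntervalIntegrable (fun s => |ω₂ (t - s) * H x s|) volume (t/2) t
  · have hab : t/2 ≤ t := by linarith
    set K := C * C₁ * (2:ℝ)^((3:ℝ)/2) * (t+1)^(-(3:ℝ)/2)
      * Real.exp (-(x - c*t)^2 / (C₁ * t)) with hK
    have hKpos : 0 < K := by positivity
    have hgint : IntervalIntegrable (fun s => K * Real.exp (α/2*(s-t))) volume (t/2) t := by
      apply Continuous.intervalIntegrable; continuity
    have hmono : ∀ s ∈ Set.Icc (t/2) t,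
        |ω₂ (t - s) * H x s| ≤ K * Real.exp (α/2*(s-t)) := by
      intro s hsI
      obtain ⟨hs1, hs2⟩ := hsI
      have hs0 : 0 < s := by linarith
      have hts : 0 ≤ t - s := by linarith
      have hb1 := hω (t - s) hts
      have hb2 := hH x s hs0
      rw [abs_mul]
      calc |ω₂ (t - s)| * |H x s|
          ≤ (C * Real.exp (-α * (t-s))) *
            (C₁ * (s + 1)^(-(3:ℝ)/2) * Real.exp (-(x - c*s)^2 / (C₁ * s))) :=
            mul_le_mul hb1 hb2 (abs_nonneg _) (by positivity)
        _ ≤ (C * Real.exp (-α * (t-s))) *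
            (C₁ * ((2:ℝ)^((3:ℝ)/2) * (t + 1)^(-(3:ℝ)/2))
              * Real.exp (-(x - c*s)^2 / (C₁ * s))) := by
            apply mul_le_mul_of_nonneg_left _ (by positivity)
            apply mul_le_mul_of_nonneg_right _ (Real.exp_pos _).le
            exact mul_le_mul_of_nonneg_left (key_rpow s t ht hs1) hC₁pos.le
        _ ≤ K * Real.exp (α/2*(s-t)) := by
            rw [hK]
            have hexp : Real.exp (-α * (t-s)) * Real.exp (-(x - c*s)^2 / (C₁ * s))
                ≤ Real.exp (-(x - c*t)^2 / (C₁ * t)) * Real.exp (α/2*(s-t)) := by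
              rw [← Real.exp_add, ← Real.exp_add]
              apply Real.exp_le_exp.2
              have hq := key_quad x c α C₁ s t hs0 hs2 hC₁pos hαC
              have hdiv : -(x - c*s)^2 / (C₁ * s) = -((x - c*s)^2 / (C₁ * s)) := by ring
              have hdiv2 : -(x - c*t)^2 / (C₁ * t) = -((x - c*t)^2 / (C₁ * t)) := by ring
              rw [hdiv, hdiv2]
              nlinarith
            nlinarith [mul_le_mul_of_nonneg_left hexp
              (by positivity : (0:ℝ) ≤ C * (C₁ * ((2:ℝ)^((3:ℝ)/2) * (t + 1)^(-(3:ℝ)/2))))]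
    calc (∫ s in (t/2)..t, |ω₂ (t - s) * H x s|)
        ≤ ∫ s in (t/2)..t, K * Real.exp (α/2*(s-t)) :=
          intervalIntegral.integral_mono_on hab hint hgint hmono
      _ = K * ∫ s in (t/2)..t, Real.exp (α/2*(s-t)) := by
          rw [intervalIntegral.integral_const_mul]
      _ ≤ K * (2/α) := mul_le_mul_of_nonneg_left (key_int α t hα) hKpos.le
      _ = C * C₁ * (2:ℝ)^((3:ℝ)/2) * (2/α) * (t + 1)^(-(3:ℝ)/2)
          * Real.exp (-(x - c*t)^2 / (C₁ * t)) := by rw [hK]; ring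
  · rw [intervalIntegral.integral_undef hint]
    positivity
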